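/- There is no EP-EFA S over the event-parameter domain X = ℕ whose flat marked data language equals the set of all strictly increasing sequences of natural numbers of even positive length, i.e. there is no EP-EFA S with L_fmd(S) = { a₁a₂…a_{2n} : n ≥ 1 and a_{i+1} > a_i for all i ∈ [1 : 2n−1] }. (Since this language is the flat marked data language of an EFA, this shows there exists an EFA that is not data-equivalent to any EP-EFA.) -/

import Mathlib

attribute [local instance] Classical.propDecidable

universe u v w

/-- A symbolic transition of an EP-EFA: source and target states, event tag,
step-length, and a guard given by its denotation (a set of parameter tuples
of length `len`). -/
structure SymTrans (Q : Type u) (E : Type v) (X : Type w) where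
  src : Q
  tgt : Q
  tag : E
  len : ℕ
  guard : Set (List X)
  guard_len : ∀ l ∈ guard, l.length = len

/-- An Event-Parameters Extended Finite Automaton (EP-EFA): initial states,
marked states, and a set of symbolic transitions. -/
structure EPEFA (Q : Type u) (E : Type v) (X : Type w) where
  init : Set Q
  marked : Set Q
  trans : Set (SymTrans Q E X)

variable {Q : Type u} {E : Type v} {X : Type w}

/-- The flat data string of a parameterized string: the concatenation of all
parameter values in order. -/
def flatData (u : List (E × List X)) : List X := (u.map Prod.snd).flatten

/-- The reverse of a parameterized string: events in reverse order, each
parameter tuple reversed. -/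
def strRev (u : List (E × List X)) : List (E × List X) :=
  (u.map fun ev => (ev.1, ev.2.reverse)).reverse

/-- The reverse of a data string / observation: tuples in reverse order, each
tuple reversed. -/
def obsRev (w : List (List X)) : List (List X) := (w.map List.reverse).reverse

/-- The observation `θ(D(u))` of a parameterized string `u`, determined by the
observability set `ϑ`: strip event tags, delete unobservable parameter values,
drop empty tuples. -/
noncomputable def obsOf (ϑ : Set X) (u : List (E × List X)) : List (List X) :=
  ((u.map Prod.snd).map fun l => l.filter fun a => a ∈ ϑ).filter fun l => l ≠ []

/-- A parameterized event `ev` triggers a concrete transition from `q` to `q'`. -/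
def EPEFA.Step (S : EPEFA Q E X) (q : Q) (ev : E × List X) (q' : Q) : Prop :=
  ∃ t ∈ S.trans, t.src = q ∧ t.tgt = q' ∧ t.tag = ev.1 ∧ ev.2 ∈ t.guard

/-- `S.Path q u q'` : the parameterized string `u` labels a chain of concrete
transitions from `q` to `q'` (with `q →ε q` always). -/
inductive EPEFA.Path (S : EPEFA Q E X) : Q → List (E × List X) → Q → Prop
  | nil (q : Q) : EPEFA.Path S q [] q
  | cons {q q' q'' : Q} {ev : E × List X} {u : List (E × List X)} :
      S.Step q ev q' → EPEFA.Path S q' u q'' → EPEFA.Path S q (ev :: u) q''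

/-- The language between a set of source states and a set of target states. -/
def EPEFA.LBtw (S : EPEFA Q E X) (Q1 Q2 : Set Q) : Set (List (E × List X)) :=
  {u | ∃ q1 ∈ Q1, ∃ q2 ∈ Q2, S.Path q1 u q2}

/-- The generated language `L(S)`. -/
def EPEFA.Lang (S : EPEFA Q E X) : Set (List (E × List X)) :=
  S.LBtw S.init Set.univ

/-- The marked language `L_m(S)`. -/
def EPEFA.LangM (S : EPEFA Q E X) : Set (List (E × List X)) :=
  S.LBtw S.init S.marked

/-- The flat marked data language `L_fmd(S)`. -/
def EPEFA.Lfmd (S : EPEFA Q E X) : Set (List X) := flatData '' S.LangM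

/-- The set of observations `Θ(S)`. -/
def EPEFA.ThetaSet (S : EPEFA Q E X) (ϑ : Set X) : Set (List (List X)) :=
  obsOf ϑ '' S.Lang

/-- The state estimation `Est^S(w)`. -/
def EPEFA.Est (S : EPEFA Q E X) (ϑ : Set X) (w : List (List X)) : Set Q :=
  {q | ∃ q0 ∈ S.init, ∃ u, S.Path q0 u q ∧ obsOf ϑ u = w}

/-- The reverse of a symbolic transition: source and target swapped, guard
denotation reversed tuple-wise. -/
def SymTrans.rev (t : SymTrans Q E X) : SymTrans Q E X where
  src := t.tgt
  tgt := t.src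
  tag := t.tag
  len := t.len
  guard := {l | l.reverse ∈ t.guard}
  guard_len := fun l hl => by simpa using t.guard_len l.reverse hl

/-- The reverse EP-EFA `Sʳ`: all states initial, reversed transitions. -/
def EPEFA.rev (S : EPEFA Q E X) : EPEFA Q E X where
  init := Set.univ
  marked := S.init
  trans := SymTrans.rev '' S.trans

/-- Current-state opacity of `S` w.r.t. secret states `Qs`, non-secret states
`Qns` and the observation function determined by `ϑ`. -/
def EPEFA.CSOpaque (S : EPEFA Q E X) (ϑ : Set X) (Qs Qns : Set Q) : Prop :=
  ∀ u ∈ S.LBtw S.init Qs, ∃ v ∈ S.LBtw S.init Qns, obsOf ϑ u = obsOf ϑ v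

/-- Initial-state opacity of `S` w.r.t. secret initial states `Qs`, non-secret
initial states `Qns` and the observation function determined by `ϑ`. -/
def EPEFA.ISOpaque (S : EPEFA Q E X) (ϑ : Set X) (Qs Qns : Set Q) : Prop :=
  ∀ u ∈ S.LBtw Qs Set.univ, ∃ v ∈ S.LBtw Qns Set.univ, obsOf ϑ u = obsOf ϑ v

/-- Infinite-step opacity of `S` w.r.t. secret states `Qs`, non-secret states
`Qns` and the observation function determined by `ϑ`: every run from an
initial state through a secret state is matched, observation-wise (both the
prefix up to the secret state and the suffix), by a run through a non-secret
state. -/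
def EPEFA.InfSOpaque (S : EPEFA Q E X) (ϑ : Set X) (Qs Qns : Set Q) : Prop :=
  ∀ q0 ∈ S.init, ∀ qs ∈ Qs, ∀ (q : Q) (u u2 : List (E × List X)),
    S.Path q0 u qs → S.Path qs u2 q →
    ∃ q0' ∈ S.init, ∃ qn ∈ Qns, ∃ (q' : Q) (v v2 : List (E × List X)),
      S.Path q0' v qn ∧ S.Path qn v2 q' ∧
      obsOf ϑ u = obsOf ϑ v ∧ obsOf ϑ u2 = obsOf ϑ v2

theorem flatData_append (u v : List (E × List X)) :
    flatData (u ++ v) = flatData u ++ flatData v := by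
  simp [flatData]

theorem path_trans {S : EPEFA Q E X} {q q' q'' : Q} {u v : List (E × List X)}
    (h1 : S.Path q u q') (h2 : S.Path q' v q'') : S.Path q (u ++ v) q'' := by
  revert h2
  induction h1 with
  | nil => exact fun h2 => h2
  | cons hs _ ih => exact fun h2 => .cons hs (ih h2)

theorem path_split {S : EPEFA Q E X} {q q'' : Q} {u v : List (E × List X)}
    (h : S.Path q (u ++ v) q'') : ∃ q', S.Path q u q' ∧ S.Path q' v q'' := by
  induction u generalizing q with
  | nil => exact ⟨q, .nil q, h⟩
  | cons ev rest ih =>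
    cases h with
    | cons hs hp =>
      obtain ⟨q', h1, h2⟩ := ih hp
      exact ⟨q', .cons hs h1, h2⟩

theorem tuple_len_le {S : EPEFA Q E X} {q q' : Q} {u : List (E × List X)} {L : ℕ}
    (hL : ∀ t ∈ S.trans, t.len ≤ L) (h : S.Path q u q') :
    ∀ ev ∈ u, ev.2.length ≤ L := by
  induction h with
  | nil => intro ev hev; simp at hev
  | cons hs _ ih =>
    intro ev hev
    rcases List.mem_cons.mp hev with h | h
    · subst h
      obtain ⟨t, ht, _, _, _, hg⟩ := hs
      rw [t.guard_len _ hg]; exact hL t ht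
    · exact ih ev h

theorem exists_split {u : List (E × List X)} {L : ℕ}
    (hlen : ∀ ev ∈ u, ev.2.length ≤ L) (hbig : L < (flatData u).length) :
    ∃ u1 u2, u = u1 ++ u2 ∧ flatData u1 ≠ [] ∧ flatData u2 ≠ [] := by
  induction u with
  | nil => simp [flatData] at hbig
  | cons ev rest ih =>
    have hcons : flatData (ev :: rest) = ev.2 ++ flatData rest := by simp [flatData]
    by_cases h : ev.2 = []
    · obtain ⟨u1, u2, he, h1, h2⟩ :=
        ih (fun e he' => hlen e (List.mem_cons_of_mem _ he'))
          (by rw [hcons, h] at hbig; simpa using hbig)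
      refine ⟨ev :: u1, u2, by rw [he, List.cons_append], ?_, h2⟩
      have : flatData (ev :: u1) = ev.2 ++ flatData u1 := by simp [flatData]
      rw [this, h]; simpa using h1
    · refine ⟨[ev], rest, rfl, by simpa [flatData] using h, ?_⟩
      intro hc
      have h1 : ev.2.length ≤ L := hlen ev List.mem_cons_self
      rw [hcons, hc] at hbig
      simp at hbig
      omega

/-- There is no EP-EFA (finite state set, finite event-tag set, finitely many
symbolic transitions) over the event-parameter domain `ℕ` whose flat marked
data language is the set of all strictly increasing sequences of natural
numbers of even positive length. -/
theorem no_epefa_for_increasing_even_length :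
    ¬ ∃ (Q : Type) (E : Type) (_ : Finite Q) (_ : Finite E) (S : EPEFA Q E ℕ),
        S.trans.Finite ∧
        S.Lfmd = {l : List ℕ | ∃ n : ℕ, 1 ≤ n ∧ l.length = 2 * n ∧
          l.Chain' (· < ·)} := by
  rintro ⟨Q, E, hQ, hE, S, hfin, hL⟩
  obtain ⟨L, hLb⟩ : ∃ L, ∀ t ∈ S.trans, t.len ≤ L := by
    obtain ⟨L, hub⟩ := (hfin.image SymTrans.len).bddAbove
    exact ⟨L, fun t ht => hub (Set.mem_image_of_mem _ ht)⟩
  set N := 2 * (L + 1) with hN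
  have key : ∀ m : ℕ, ∃ (qmid q0 qm : Q) (u1 u2 : List (E × List ℕ)),
      q0 ∈ S.init ∧ qm ∈ S.marked ∧ S.Path q0 u1 qmid ∧ S.Path qmid u2 qm ∧
      flatData u1 ≠ [] ∧ flatData u2 ≠ [] ∧
      flatData u1 ++ flatData u2 = List.range' m N := by
    intro m
    have hmem : List.range' m N ∈ S.Lfmd := by
      rw [hL]
      exact ⟨L + 1, by omega, by simp [hN], List.isChain_lt_range' m N Nat.one_pos⟩
    obtain ⟨u, hu, hflat⟩ := hmem
    obtain ⟨q0, hq0, qm, hqm, hpath⟩ := hu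
    have hlenb := tuple_len_le hLb hpath
    have hbig : L < (flatData u).length := by rw [hflat]; simp [hN]; omega
    obtain ⟨u1, u2, he, h1, h2⟩ := exists_split hlenb hbig
    subst he
    obtain ⟨qmid, hp1, hp2⟩ := path_split hpath
    exact ⟨qmid, q0, qm, u1, u2, hq0, hqm, hp1, hp2, h1, h2, by
      rw [← flatData_append, hflat]⟩
  choose qmid q0f qmf u1f u2f hq0 hqm hp1 hp2 hne1 hne2 hflat using key
  have main : ∀ k1 k2 : ℕ, k1 < k2 → qmid (k1 * N) = qmid (k2 * N) → False := by
    intro k1 k2 hk hkeq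
    set m1 := k1 * N with hm1
    set m2 := k2 * N with hm2
    have hm : m1 + N ≤ m2 := by
      calc m1 + N = (k1 + 1) * N := by rw [hm1]; ring
        _ ≤ k2 * N := Nat.mul_le_mul_right N (by omega)
    set a := flatData (u1f m2) with ha
    set b := flatData (u2f m1) with hb
    have hsplice : a ++ b ∈ S.Lfmd := by
      refine ⟨u1f m2 ++ u2f m1,
        ⟨q0f m2, hq0 _, qmf m1, hqm _, path_trans (hp1 m2) ?_⟩,
        flatData_append _ _⟩
      rw [← hkeq]; exact hp2 m1
    rw [hL] at hsplice
    obtain ⟨n, -, -, hchain⟩ := hsplice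
    obtain ⟨-, -, hrel⟩ := List.isChain_append.mp hchain
    have hxy := hrel (a.getLast (hne1 m2))
      (by exact List.getLast?_eq_getLast_of_ne_nil (hne1 m2))
      (b.head (hne2 m1)) (by exact List.head?_eq_head (hne2 m1))
    have hxa : a.getLast (hne1 m2) ∈ List.range' m2 N := by
      rw [← hflat m2]
      exact List.mem_append_left _ (List.getLast_mem _)
    have hyb : b.head (hne2 m1) ∈ List.range' m1 N := by
      rw [← hflat m1]
      exact List.mem_append_right _ (List.head_mem _)
    have h1 := List.mem_range'_1.mp hxa
    have h2 := List.mem_range'_1.mp hyb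
    omega
  have := Finite.exists_ne_map_eq_of_infinite (fun k : ℕ => qmid (k * N))
  obtain ⟨k1, k2, hne, heq⟩ := this
  rcases hne.lt_or_gt with hk | hk
  · exact main k1 k2 hk heq
  · exact main k2 k1 hk heq.symm
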